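/- arXiv:1807.11361 — 5 statements merged into one kernel-verified Lean document; each statement's English description precedes it below -/
import Mathlib

section
/- The function u(x,t) = 1 - 4/(1 + 4(x - 6t - x₀)²) is a solution of the mKdV equation u_t + 6u²u_x + u_xxx = 0 for any real x₀. -/
private lemma dg (c y : ℝ) : HasDerivAt (fun y : ℝ => 1 + 4*(y-c)^2) (8*(y-c)) y := by
  have h : HasDerivAt (fun y : ℝ => y - c) 1 y := (hasDerivAt_id y).sub_const c
  have := ((h.pow 2).const_mul 4).const_add 1
  refine this.congr_deriv ?_
  push_cast; ring

private lemma d1 (c y : ℝ) :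
    HasDerivAt (fun y : ℝ => 1 - 4/(1+4*(y-c)^2)) (32*(y-c)/(1+4*(y-c)^2)^2) y := by
  have hg : (1+4*(y-c)^2) ≠ 0 := by positivity
  have := ((hasDerivAt_const y (4:ℝ)).div (dg c y) hg).const_sub 1
  refine this.congr_deriv ?_
  field_simp
  ring

private lemma d2 (c y : ℝ) :
    HasDerivAt (fun y : ℝ => 32*(y-c)/(1+4*(y-c)^2)^2)
      ((32 - 384*(y-c)^2)/(1+4*(y-c)^2)^3) y := by
  have hg : ((1+4*(y-c)^2)^2) ≠ 0 := by positivity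
  have hg0 : (1+4*(y-c)^2) ≠ 0 := by positivity
  have hnum : HasDerivAt (fun y : ℝ => 32*(y-c)) 32 y := by
    have := ((hasDerivAt_id y).sub_const c).const_mul 32
    refine this.congr_deriv ?_; ring
  have := hnum.div ((dg c y).pow 2) hg
  refine this.congr_deriv ?_
  simp only [Pi.pow_apply]
  field_simp
  ring

private lemma d3 (c y : ℝ) :
    HasDerivAt (fun y : ℝ => (32 - 384*(y-c)^2)/(1+4*(y-c)^2)^3)
      ((y-c)*(-1536 + 6144*(y-c)^2)/(1+4*(y-c)^2)^4) y := by
  have hg : ((1+4*(y-c)^2)^3) ≠ 0 := by positivity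
  have hg0 : (1+4*(y-c)^2) ≠ 0 := by positivity
  have hnum : HasDerivAt (fun y : ℝ => 32 - 384*(y-c)^2) (-(768*(y-c))) y := by
    have := ((((hasDerivAt_id y).sub_const c).pow 2).const_mul 384).const_sub 32
    refine this.congr_deriv ?_; simp; ring
  have := hnum.div ((dg c y).pow 3) hg
  refine this.congr_deriv ?_
  simp only [Pi.pow_apply]
  field_simp
  ring

private lemma e1 (c : ℝ) : deriv (fun y : ℝ => 1 - 4/(1+4*(y-c)^2))
    = fun y => 32*(y-c)/(1+4*(y-c)^2)^2 := funext fun y => (d1 c y).deriv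

private lemma e2 (c : ℝ) : deriv (fun y : ℝ => 32*(y-c)/(1+4*(y-c)^2)^2)
    = fun y => (32 - 384*(y-c)^2)/(1+4*(y-c)^2)^3 := funext fun y => (d2 c y).deriv

theorem stmt_3 (x₀ : ℝ) (u : ℝ → ℝ → ℝ)
    (hu : ∀ x t, u x t = 1 - 4 / (1 + 4 * (x - 6 * t - x₀)^2)) :
    ∀ x t, deriv (fun s => u x s) t
      + 6 * (u x t)^2 * deriv (fun y => u y t) x
      + deriv (deriv (deriv (fun y => u y t))) x = 0 := by
  intro x t
  set c : ℝ := 6*t + x₀ with hc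
  -- time derivative
  have hxfun : (fun s => u x s) = (fun y : ℝ => 1 - 4/(1+4*(y-x₀)^2)) ∘ (fun s => x - 6*s) := by
    funext s; simp [hu, Function.comp]
  have hinner : HasDerivAt (fun s : ℝ => x - 6*s) (-6) t := by
    have := ((hasDerivAt_id t).const_mul 6).const_sub x
    refine this.congr_deriv ?_; ring
  have hdt : deriv (fun s => u x s) t = 32*((x-6*t)-x₀)/(1+4*((x-6*t)-x₀)^2)^2 * (-6) := by
    rw [hxfun]
    exact (HasDerivAt.comp t (d1 x₀ (x-6*t)) hinner).deriv
  -- space derivatives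
  have hyfun : (fun y => u y t) = (fun y : ℝ => 1 - 4/(1+4*(y-c)^2)) := by
    funext y
    rw [hu]
    have : y - 6*t - x₀ = y - c := by rw [hc]; ring
    rw [this]
  have hdx : deriv (fun y => u y t) x = 32*(x-c)/(1+4*(x-c)^2)^2 := by
    rw [hyfun]; exact (d1 c x).deriv
  have hd3x : deriv (deriv (deriv (fun y => u y t))) x
      = (x-c)*(-1536 + 6144*(x-c)^2)/(1+4*(x-c)^2)^4 := by
    rw [hyfun, e1, e2]; exact (d3 c x).deriv
  rw [hdt, hdx, hd3x, hu]
  have hs : x - 6*t - x₀ = x - c := by rw [hc]; ring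
  have hs2 : x - 6*t - x₀ = (x-6*t) - x₀ := by ring
  rw [hs2] at hs ⊢
  rw [hs]
  have hg0 : (1+4*(x-c)^2) ≠ 0 := by positivity
  field_simp
  ring
end

section
/- Under the Hamiltonian flow of H₀ above, the quantity H₁ = 4(λ₁³p₁q₁ + λ₂³p₂q₂) - 4(λ₁p₁q₁ + λ₂p₂q₂)² - (λ₁(p₁²-q₁²) + λ₂(p₂²-q₂²))² + 2(p₁²+q₁²+p₂²+q₂²)(λ₁²(p₁²+q₁²) + λ₂²(p₂²+q₂²)) is also conserved. -/
theorem stmt_10 (l₁ l₂ : ℝ) (p₁ q₁ p₂ q₂ : ℝ → ℝ)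
    (hp₁ : ∀ x, HasDerivAt p₁ ((p₁ x^2 + q₁ x^2 + p₂ x^2 + q₂ x^2) * q₁ x + l₁ * p₁ x) x)
    (hq₁ : ∀ x, HasDerivAt q₁ (-(p₁ x^2 + q₁ x^2 + p₂ x^2 + q₂ x^2) * p₁ x - l₁ * q₁ x) x)
    (hp₂ : ∀ x, HasDerivAt p₂ ((p₁ x^2 + q₁ x^2 + p₂ x^2 + q₂ x^2) * q₂ x + l₂ * p₂ x) x)
    (hq₂ : ∀ x, HasDerivAt q₂ (-(p₁ x^2 + q₁ x^2 + p₂ x^2 + q₂ x^2) * p₂ x - l₂ * q₂ x) x) :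
    ∀ x, deriv (fun x => 4 * (l₁^3 * p₁ x * q₁ x + l₂^3 * p₂ x * q₂ x)
      - 4 * (l₁ * p₁ x * q₁ x + l₂ * p₂ x * q₂ x)^2
      - (l₁ * (p₁ x^2 - q₁ x^2) + l₂ * (p₂ x^2 - q₂ x^2))^2
      + 2 * (p₁ x^2 + q₁ x^2 + p₂ x^2 + q₂ x^2)
          * (l₁^2 * (p₁ x^2 + q₁ x^2) + l₂^2 * (p₂ x^2 + q₂ x^2))) x = 0 := by
  intro x
  have h1 := hp₁ x
  have h2 := hq₁ x
  have h3 := hp₂ x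
  have h4 := hq₂ x
  have hT1 := HasDerivAt.const_mul (4:ℝ)
    (((HasDerivAt.const_mul (l₁^3) h1).mul h2).add ((HasDerivAt.const_mul (l₂^3) h3).mul h4))
  have hT2 := HasDerivAt.const_mul (4:ℝ)
    ((((HasDerivAt.const_mul l₁ h1).mul h2).add ((HasDerivAt.const_mul l₂ h3).mul h4)).pow 2)
  have hT3 := ((HasDerivAt.const_mul l₁ ((h1.pow 2).sub (h2.pow 2))).add
    (HasDerivAt.const_mul l₂ ((h3.pow 2).sub (h4.pow 2)))).pow 2
  have hU := (((h1.pow 2).add (h2.pow 2)).add (h3.pow 2)).add (h4.pow 2)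
  have hE := (HasDerivAt.const_mul (l₁^2) ((h1.pow 2).add (h2.pow 2))).add
    (HasDerivAt.const_mul (l₂^2) ((h3.pow 2).add (h4.pow 2)))
  have hT4 := (HasDerivAt.const_mul (2:ℝ) hU).mul hE
  have H := ((hT1.sub hT2).sub hT3).add hT4
  erw [H.deriv]
  simp only [Pi.add_apply, Pi.sub_apply, Pi.mul_apply, Pi.pow_apply]
  push_cast
  ring
end

section
/- With u and the Hamiltonian system as above and E₀ := u² + 4λ₁p₁q₁ + 4λ₂p₂q₂ (a constant), u satisfies u'' + 2u³ - (2E₀ + 4λ₁² + 4λ₂²)u = -4λ₂²(p₁²+q₁²) - 4λ₁²(p₂²+q₂²). -/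
theorem stmt_12 (l₁ l₂ : ℝ) (p₁ q₁ p₂ q₂ : ℝ → ℝ)
    (hp₁ : ∀ x, HasDerivAt p₁ ((p₁ x^2 + q₁ x^2 + p₂ x^2 + q₂ x^2) * q₁ x + l₁ * p₁ x) x)
    (hq₁ : ∀ x, HasDerivAt q₁ (-(p₁ x^2 + q₁ x^2 + p₂ x^2 + q₂ x^2) * p₁ x - l₁ * q₁ x) x)
    (hp₂ : ∀ x, HasDerivAt p₂ ((p₁ x^2 + q₁ x^2 + p₂ x^2 + q₂ x^2) * q₂ x + l₂ * p₂ x) x)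
    (hq₂ : ∀ x, HasDerivAt q₂ (-(p₁ x^2 + q₁ x^2 + p₂ x^2 + q₂ x^2) * p₂ x - l₂ * q₂ x) x) :
    ∀ x, (fun u E₀ => deriv (deriv (fun y => p₁ y^2 + q₁ y^2 + p₂ y^2 + q₂ y^2)) x
        + 2 * u^3 - (2 * E₀ + 4 * l₁^2 + 4 * l₂^2) * u
        = -4 * l₂^2 * (p₁ x^2 + q₁ x^2) - 4 * l₁^2 * (p₂ x^2 + q₂ x^2))
      (p₁ x^2 + q₁ x^2 + p₂ x^2 + q₂ x^2)
      ((p₁ x^2 + q₁ x^2 + p₂ x^2 + q₂ x^2)^2 + 4 * l₁ * p₁ x * q₁ x + 4 * l₂ * p₂ x * q₂ x) := by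
  intro x
  show _ = _
  have hu : ∀ y, HasDerivAt (fun y => p₁ y^2 + q₁ y^2 + p₂ y^2 + q₂ y^2)
      (2*l₁*(p₁ y^2 - q₁ y^2) + 2*l₂*(p₂ y^2 - q₂ y^2)) y := by
    intro y
    have := (((((hp₁ y).fun_pow 2).add ((hq₁ y).fun_pow 2)).add ((hp₂ y).fun_pow 2)).add ((hq₂ y).fun_pow 2))
    exact this.congr_deriv (by ring)
  have hd1 : deriv (fun y => p₁ y^2 + q₁ y^2 + p₂ y^2 + q₂ y^2)
      = fun y => 2*l₁*(p₁ y^2 - q₁ y^2) + 2*l₂*(p₂ y^2 - q₂ y^2) := by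
    funext y; exact (hu y).deriv
  rw [hd1]
  have hu2 : HasDerivAt (fun y => 2*l₁*(p₁ y^2 - q₁ y^2) + 2*l₂*(p₂ y^2 - q₂ y^2))
      (8*(p₁ x^2 + q₁ x^2 + p₂ x^2 + q₂ x^2)*(l₁*p₁ x*q₁ x + l₂*p₂ x*q₂ x)
        + 4*l₁^2*(p₁ x^2 + q₁ x^2) + 4*l₂^2*(p₂ x^2 + q₂ x^2)) x := by
    have := ((((hp₁ x).fun_pow 2).sub ((hq₁ x).fun_pow 2)).const_mul (2*l₁)).add
      ((((hp₂ x).fun_pow 2).sub ((hq₂ x).fun_pow 2)).const_mul (2*l₂))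
    exact this.congr_deriv (by ring)
  rw [hu2.deriv]
  ring
end

section
/- The function u(x) = -1 + 2(1-b²)/(1 - b cos(2√(1-b²) x)) with 0 ≤ b < 1 satisfies the first-order invariant (u')² + u⁴ - (2+4b²)u² + (1-4b²) = 8b² u. -/
theorem stmt_14 (b : ℝ) (hb0 : 0 ≤ b) (hb1 : b < 1) (u : ℝ → ℝ)
    (hu : ∀ x, u x = -1 + 2 * (1 - b^2) / (1 - b * Real.cos (2 * Real.sqrt (1 - b^2) * x))) :
    ∀ x, (deriv u x)^2 + (u x)^4 - (2 + 4 * b^2) * (u x)^2 + (1 - 4 * b^2) = 8 * b^2 * u x := by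
  intro x
  set s := Real.sqrt (1 - b^2) with hsdef
  have hb2 : (0:ℝ) < 1 - b^2 := by nlinarith
  have hs2 : s^2 = 1 - b^2 := Real.sq_sqrt hb2.le
  have hD : ∀ y : ℝ, 1 - b * Real.cos (2 * s * y) ≠ 0 := by
    intro y
    have h1 := Real.cos_le_one (2 * s * y)
    have h2 := Real.neg_one_le_cos (2 * s * y)
    nlinarith
  have hufun : u = fun y => -1 + 2 * (1 - b^2) / (1 - b * Real.cos (2 * s * y)) := funext hu
  have hder : HasDerivAt u
      (-(2 * (1 - b^2) * (b * Real.sin (2 * s * x) * (2 * s))) /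
        (1 - b * Real.cos (2 * s * x))^2) x := by
    have h1 : HasDerivAt (fun y : ℝ => 2 * s * y) (2 * s) x := by
      simpa using (hasDerivAt_id x).const_mul (2 * s)
    have h2 : HasDerivAt (fun y => Real.cos (2 * s * y))
        (-Real.sin (2 * s * x) * (2 * s)) x := (Real.hasDerivAt_cos _).comp x h1
    have h3 : HasDerivAt (fun y => 1 - b * Real.cos (2 * s * y))
        (b * Real.sin (2 * s * x) * (2 * s)) x := by
      have := (h2.const_mul b).const_sub 1
      exact this.congr_deriv (by ring)
    have h4 := (hasDerivAt_const x (2 * (1 - b^2))).div h3 (hD x)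
    have h5 := h4.const_add (-1)
    rw [hufun]
    exact h5.congr_deriv (by ring)
  set c := Real.cos (2 * s * x) with hc
  set sn := Real.sin (2 * s * x) with hsn0
  have hsn : sn^2 = 1 - c^2 := by
    have := Real.sin_sq_add_cos_sq (2 * s * x)
    linarith
  have hDx : 1 - b * c ≠ 0 := hD x
  have hv2 : (deriv u x)^2 = 16 * (1 - b^2)^3 * b^2 * (1 - c^2) / (1 - b * c)^4 := by
    rw [hder.deriv, div_pow]
    congr 1
    · linear_combination 16 * (1 - b^2)^2 * b^2 * (s^2 * hsn + (1 - c^2) * hs2)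
    · ring
  rw [hv2, hu x, ← hc]
  field_simp
  ring
end

section
/- Let φ = (p,q) be a nonzero solution of φ' = U(λ)φ with U = [[λ, u],[-u, -λ]], and suppose (p̂,q̂) is defined by p̂ = pφ₁ - 2q/(p²+q²), q̂ = qφ₁ + 2p/(p²+q²) where φ₁ is any differentiable function with φ₁' = -8λpq/(p²+q²)². Then (p̂,q̂) also solves the same linear system and the Wronskian satisfies p q̂ - p̂ q = 2. -/
theorem stmt_18 (lam : ℝ) (u p q φ₁ : ℝ → ℝ)
    (hp : ∀ x, HasDerivAt p (lam * p x + u x * q x) x)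
    (hq : ∀ x, HasDerivAt q (-(u x) * p x - lam * q x) x)
    (hpq : ∀ x, p x^2 + q x^2 ≠ 0)
    (hφ : ∀ x, HasDerivAt φ₁ (-8 * lam * p x * q x / (p x^2 + q x^2)^2) x)
    (P Q : ℝ → ℝ)
    (hP : ∀ x, P x = p x * φ₁ x - 2 * q x / (p x^2 + q x^2))
    (hQ : ∀ x, Q x = q x * φ₁ x + 2 * p x / (p x^2 + q x^2)) :
    (∀ x, HasDerivAt P (lam * P x + u x * Q x) x) ∧
    (∀ x, HasDerivAt Q (-(u x) * P x - lam * Q x) x) ∧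
    (∀ x, p x * Q x - P x * q x = 2) := by
  have hs : ∀ x, HasDerivAt (fun x => p x ^ 2 + q x ^ 2)
      (2 * lam * (p x ^ 2 - q x ^ 2)) x := by
    intro x
    have h : HasDerivAt (fun x => p x ^ 2 + q x ^ 2) _ x := ((hp x).pow 2).add ((hq x).pow 2)
    convert h using 1
    ring
  have hPe : P = fun x => p x * φ₁ x - 2 * q x / (p x ^ 2 + q x ^ 2) := funext hP
  have hQe : Q = fun x => q x * φ₁ x + 2 * p x / (p x ^ 2 + q x ^ 2) := funext hQ
  refine ⟨?_, ?_, ?_⟩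
  · intro x
    rw [hPe]
    have h : HasDerivAt (fun x => p x * φ₁ x - 2 * q x / (p x ^ 2 + q x ^ 2)) _ x := ((hp x).mul (hφ x)).sub (((hq x).const_mul 2).div (hs x) (hpq x))
    convert h using 1
    simp only [hP, hQ]
    field_simp [hpq x]
    ring
  · intro x
    rw [hQe]
    have h : HasDerivAt (fun x => q x * φ₁ x + 2 * p x / (p x ^ 2 + q x ^ 2)) _ x := ((hq x).mul (hφ x)).add (((hp x).const_mul 2).div (hs x) (hpq x))
    convert h using 1
    simp only [hP, hQ]
    field_simp [hpq x]
    ring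
  · intro x
    simp only [hP, hQ]
    field_simp [hpq x]
    ring
end
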